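/- Let a0, a1, a2, b0, b1, b2, λ be real numbers and set A(x) = a0·x² + a1·x + a2 and B(y) = b0·y² + b1·y + b2. Then for all real x, y one has E(A,B,λ)(x,y) = 2(a0+b0)(a2+b2) − (1/2)(a1+b1)² − 2λ². In particular, E(A,B,λ) vanishes identically if and only if 4(a0+b0)(a2+b2) − (a1+b1)² = 4λ². -/

import Mathlib

lemma quad_d1 (a0 a1 a2 : ℝ) :
    deriv (fun x : ℝ => a0 * x ^ 2 + a1 * x + a2) = fun x => 2 * a0 * x + a1 := by
  funext x
  have h : HasDerivAt (fun x : ℝ => a0 * x ^ 2 + a1 * x + a2) (2 * a0 * x + a1) x := by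
    have := (((hasDerivAt_pow 2 x).const_mul a0).add ((hasDerivAt_id x).const_mul a1)).add_const a2
    exact this.congr_deriv (by norm_num; ring)
  exact h.deriv

lemma quad_d2 (a0 a1 a2 : ℝ) :
    deriv^[2] (fun x : ℝ => a0 * x ^ 2 + a1 * x + a2) = fun _ => 2 * a0 := by
  show deriv (deriv _) = _
  rw [quad_d1]
  funext x
  have h : HasDerivAt (fun x : ℝ => 2 * a0 * x + a1) (2 * a0) x := by
    simpa using ((hasDerivAt_id x).const_mul (2 * a0)).add_const a1
  exact h.deriv

lemma quad_d3 (a0 a1 a2 : ℝ) :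
    deriv^[3] (fun x : ℝ => a0 * x ^ 2 + a1 * x + a2) = fun _ => 0 := by
  show deriv (deriv^[2] _) = _
  rw [quad_d2]
  simp

/-- The orthotoric expression `E(A,B,λ)(x,y)` associated to profile functions
`A, B : ℝ → ℝ` and a real parameter `λ`:  it equals `(x-y)⁴` times the operator `𝒮`
of the Bismut-Ricci-flat equation evaluated on the orthotoric Kähler ansatz. -/
noncomputable def orthoE (A B : ℝ → ℝ) (lam : ℝ) (x y : ℝ) : ℝ :=
  ((x - y) ^ 2 / 2) *
      (deriv (fun t => A t * deriv^[3] A t) x + deriv (fun t => B t * deriv^[3] B t) y +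
        deriv^[2] A x * deriv^[2] B y) -
    (x - y) *
      (A x * deriv^[3] A x - B y * deriv^[3] B y + deriv A x * deriv^[2] B y -
        deriv B y * deriv^[2] A x) +
    (A x + B y) * (deriv^[2] A x + deriv^[2] B y) -
    (1 / 2) * (deriv A x + deriv B y) ^ 2 - 2 * lam ^ 2

theorem stmt_0 (a0 a1 a2 b0 b1 b2 lam : ℝ) (A B : ℝ → ℝ)
    (hA : ∀ x, A x = a0 * x ^ 2 + a1 * x + a2)
    (hB : ∀ y, B y = b0 * y ^ 2 + b1 * y + b2) :
    (∀ x y : ℝ, orthoE A B lam x y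
        = 2 * (a0 + b0) * (a2 + b2) - (1 / 2) * (a1 + b1) ^ 2 - 2 * lam ^ 2) ∧
    ((∀ x y : ℝ, orthoE A B lam x y = 0) ↔
        4 * (a0 + b0) * (a2 + b2) - (a1 + b1) ^ 2 = 4 * lam ^ 2) := by
  have hAe : A = fun x => a0 * x ^ 2 + a1 * x + a2 := funext hA
  have hBe : B = fun y => b0 * y ^ 2 + b1 * y + b2 := funext hB
  subst hAe hBe
  have key : ∀ x y : ℝ, orthoE (fun x => a0 * x ^ 2 + a1 * x + a2)
      (fun y => b0 * y ^ 2 + b1 * y + b2) lam x y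
      = 2 * (a0 + b0) * (a2 + b2) - (1 / 2) * (a1 + b1) ^ 2 - 2 * lam ^ 2 := by
    intro x y
    unfold orthoE
    rw [quad_d3, quad_d3, quad_d2, quad_d2, quad_d1, quad_d1]
    simp only [mul_zero, deriv_const']
    ring
  refine ⟨key, ?_⟩
  constructor
  · intro h
    have := h 0 0
    rw [key 0 0] at this
    linarith
  · intro h x y
    rw [key x y]
    linarith
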